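/- For every positive integer r and 0 < z < 1, Ath(1,…,1;z) (r ones) = (tanh^{−1} z)^r / r!. -/

import Mathlib

set_option maxHeartbeats 1000000

open Real Finset

/-- The level-2 multiple polylogarithm
`Ath(k_1,…,k_r;z) = ∑ z^{m_r}/(m_1^{k_1} ⋯ m_r^{k_r})`, the sum over
`0 < m_1 < ⋯ < m_r` with `m_i ≡ i (mod 2)`. -/
noncomputable def AthL (k : List ℕ) (z : ℝ) : ℝ :=
  ∑' n : Fin k.length → ℕ,
    z ^ (∑ i, (2 * n i + 1)) /
      ∏ j, ((∑ i ∈ Finset.Iic j, (2 * n i + 1) : ℕ) : ℝ) ^ (k.get j)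

/-- The inverse hyperbolic tangent `tanh⁻¹ z = (1/2) log((1+z)/(1-z))`,
equal to `∑_{n ≥ 0} z^{2n+1}/(2n+1)` for `|z| < 1`. -/
noncomputable def artanhL (z : ℝ) : ℝ := (1 / 2) * Real.log ((1 + z) / (1 - z))

section aux

lemma rev_le_iff' {m : ℕ} {i j : Fin m} : i.rev ≤ j ↔ j.rev ≤ i := by
  rw [Fin.le_def, Fin.le_def, Fin.val_rev, Fin.val_rev]; omega

lemma sum_Ici_fin {M : Type*} [AddCommMonoid M] (m : ℕ) (j : Fin m) (g : Fin (m+1) → M) :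
    ∑ i ∈ Ici j.succ, g i = ∑ i ∈ Ici j, g i.succ := by
  have h1 : ∀ (k : ℕ) (t : Fin k) (f : Fin k → M), ∑ i ∈ Ici t, f i = ∑ i : Fin k, if t ≤ i then f i else 0 := by
    intro k t f
    rw [eq_comm, ← Finset.sum_filter]
    congr 1
    ext x; simp
  rw [h1, h1, Fin.sum_univ_succ]
  have h0 : ¬ (j.succ ≤ 0) := by simp [Fin.le_def]
  rw [if_neg h0, zero_add]
  exact Finset.sum_congr rfl fun i _ => by simp [Fin.succ_le_succ_iff]

lemma sum_Iic_rev {M : Type*} [AddCommMonoid M] (m : ℕ) (j : Fin m) (g : Fin m → M) :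
    ∑ i ∈ Finset.Iic j, g i.rev = ∑ i ∈ Finset.Ici j.rev, g i := by
  apply Finset.sum_nbij' (fun i => i.rev) (fun i => i.rev)
  · intro a ha; simp only [mem_Iic] at ha; simp only [mem_Ici]
    exact rev_le_iff'.mpr (by simpa [Fin.rev_rev] using Fin.rev_le_rev.mpr ha)
  · intro a ha; simp only [mem_Ici] at ha; simp only [mem_Iic]
    simpa [Fin.rev_rev] using rev_le_iff'.mp (by simpa [Fin.rev_rev] using ha)
  all_goals intros; simp [Fin.rev_rev]

lemma suffix_perm_sum : ∀ (m : ℕ) (a : Fin m → ℝ), (∀ i, 0 < a i) →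
    ∑ σ : Equiv.Perm (Fin m), ∏ j, (∑ i ∈ Finset.Ici j, a (σ i))⁻¹ = ∏ i, (a i)⁻¹ := by
  intro m
  induction m with
  | zero => intro a _; simp
  | succ m ih =>
    intro a ha
    have hS : 0 < ∑ i, a i := Finset.sum_pos (fun i _ => ha i) ⟨⟨0, Nat.succ_pos m⟩, Finset.mem_univ _⟩
    rw [← Equiv.sum_comp (Equiv.Perm.decomposeFin.symm)
        (fun σ => ∏ j, (∑ i ∈ Finset.Ici j, a (σ i))⁻¹), Fintype.sum_prod_type]
    have key : ∀ p : Fin (m+1), ∀ e : Equiv.Perm (Fin m),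
        (∏ j, (∑ i ∈ Finset.Ici j, a (Equiv.Perm.decomposeFin.symm (p, e) i))⁻¹)
        = (∑ i, a i)⁻¹ * ∏ j, (∑ i ∈ Finset.Ici j, a (Equiv.swap 0 p (e i).succ))⁻¹ := by
      intro p e
      rw [Fin.prod_univ_succ]
      congr 1
      · congr 1
        rw [show Finset.Ici (0 : Fin (m+1)) = Finset.univ by ext x; simp [Fin.zero_le]]
        exact Equiv.sum_comp _ a
      · refine Finset.prod_congr rfl fun j _ => ?_
        congr 1
        rw [sum_Ici_fin]
        exact Finset.sum_congr rfl fun i _ => by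
          rw [Equiv.Perm.decomposeFin_symm_apply_succ]
    calc ∑ p : Fin (m+1), ∑ e : Equiv.Perm (Fin m),
          ∏ j, (∑ i ∈ Finset.Ici j, a (Equiv.Perm.decomposeFin.symm (p, e) i))⁻¹
        = ∑ p : Fin (m+1), (∑ i, a i)⁻¹ * ((∏ i, (a i)⁻¹) * a p) := by
          refine Finset.sum_congr rfl fun p _ => ?_
          rw [Finset.sum_congr rfl fun e _ => key p e, ← Finset.mul_sum,
            ih (fun i => a (Equiv.swap 0 p i.succ)) (fun i => ha _)]
          congr 1
          have h2 : ∏ x : Fin (m+1), (a (Equiv.swap 0 p x))⁻¹ = ∏ i, (a i)⁻¹ :=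
            Equiv.prod_comp (Equiv.swap 0 p) (fun x => (a x)⁻¹)
          rw [Fin.prod_univ_succ, Equiv.swap_apply_left] at h2
          have hp := (ha p).ne'
          rw [← h2, mul_comm ((a p)⁻¹), mul_assoc, inv_mul_cancel₀ hp, mul_one]
      _ = ∏ i, (a i)⁻¹ := by
          rw [← Finset.mul_sum, ← Finset.mul_sum, mul_comm (∏ i, (a i)⁻¹),
            ← mul_assoc, inv_mul_cancel₀ hS.ne', one_mul]

lemma prefix_perm_sum (m : ℕ) (a : Fin m → ℝ) (ha : ∀ i, 0 < a i) :
    ∑ σ : Equiv.Perm (Fin m), ∏ j, (∑ i ∈ Finset.Iic j, a (σ i))⁻¹ = ∏ i, (a i)⁻¹ := by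
  rw [← suffix_perm_sum m a ha]
  refine Fintype.sum_bijective (fun σ : Equiv.Perm (Fin m) => Fin.revPerm.trans σ)
    (Function.bijective_iff_has_inverse.mpr
      ⟨fun τ => Fin.revPerm.trans τ, fun σ => by ext i; simp, fun σ => by ext i; simp⟩)
    _ _ fun σ => ?_
  rw [← Equiv.prod_comp Fin.revPerm
    (fun j => (∑ i ∈ Finset.Ici j, a ((Fin.revPerm.trans σ) i))⁻¹)]
  refine Finset.prod_congr rfl fun j _ => ?_
  congr 1
  have := sum_Iic_rev m j (fun i => a (σ i.rev))
  simp only [Fin.rev_rev] at this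
  simpa using this

lemma hasSum_artanh {z : ℝ} (h0 : 0 < z) (h1 : z < 1) :
    HasSum (fun n : ℕ => z ^ (2 * n + 1) / ((2 * n + 1 : ℕ) : ℝ)) (artanhL z) := by
  have habs : |z| < 1 := abs_lt.mpr ⟨by linarith, h1⟩
  have h := (hasSum_log_sub_log_of_abs_lt_one habs).mul_left (1 / 2)
  have : artanhL z = 1 / 2 * (Real.log (1 + z) - Real.log (1 - z)) := by
    rw [artanhL, Real.log_div (by linarith) (by linarith)]
  rw [this]
  refine h.congr_fun fun n => ?_
  push_cast
  field_simp

lemma tsum_pi_prod (g : ℕ → ℝ) (hg0 : ∀ n, 0 ≤ g n) (hg : Summable g) :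
    ∀ m : ℕ, Summable (fun n : Fin m → ℕ => ∏ i, g (n i)) ∧
      (∑' n : Fin m → ℕ, ∏ i, g (n i)) = (∑' n, g n) ^ m := by
  intro m
  induction m with
  | zero =>
    haveI : Unique (Fin 0 → ℕ) := ⟨⟨fun i => i.elim0⟩, fun f => funext fun i => i.elim0⟩
    constructor
    · exact Summable.of_finite
    · rw [tsum_fintype]; simp
  | succ m ih =>
    obtain ⟨ihs, iht⟩ := ih
    have hgn : Summable fun n => ‖g n‖ := by
      refine hg.congr fun n => ?_
      rw [Real.norm_eq_abs, abs_of_nonneg (hg0 n)]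
    have hPn : Summable fun n : Fin m → ℕ => ‖∏ i, g (n i)‖ := by
      refine ihs.congr fun n => ?_
      rw [Real.norm_eq_abs, abs_of_nonneg (Finset.prod_nonneg fun i _ => hg0 _)]
    have hprod : Summable (fun p : ℕ × (Fin m → ℕ) => g p.1 * ∏ i, g (p.2 i)) :=
      summable_mul_of_summable_norm (f := g) (g := fun n : Fin m → ℕ => ∏ i, g (n i)) hgn hPn
    have hcomp : ∀ p : ℕ × (Fin m → ℕ),
        (∏ i, g ((Fin.consEquiv (fun _ : Fin (m + 1) => ℕ)) p i)) = g p.1 * ∏ i, g (p.2 i) := by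
      rintro ⟨x, p⟩
      rw [Fin.prod_univ_succ]
      simp [Fin.consEquiv]
    have hsum : Summable (fun n : Fin (m + 1) → ℕ => ∏ i, g (n i)) := by
      rw [← Equiv.summable_iff (Fin.consEquiv (fun _ : Fin (m + 1) => ℕ))]
      exact hprod.congr fun p => (hcomp p).symm
    refine ⟨hsum, ?_⟩
    rw [← Equiv.tsum_eq (Fin.consEquiv (fun _ : Fin (m + 1) => ℕ)) (fun n => ∏ i, g (n i))]
    calc (∑' p : ℕ × (Fin m → ℕ), ∏ i, g ((Fin.consEquiv (fun _ : Fin (m+1) => ℕ)) p i))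
        = ∑' p : ℕ × (Fin m → ℕ), g p.1 * ∏ i, g (p.2 i) := tsum_congr hcomp
      _ = (∑' n, g n) * (∑' n : Fin m → ℕ, ∏ i, g (n i)) :=
          (tsum_mul_tsum_of_summable_norm hgn hPn).symm
      _ = (∑' n, g n) ^ (m + 1) := by rw [iht, pow_succ]; ring

lemma main_lemma (m : ℕ) {z : ℝ} (h0 : 0 < z) (h1 : z < 1) :
    (∑' n : Fin m → ℕ, z ^ (∑ i, (2 * n i + 1)) /
      ∏ j, ((∑ i ∈ Finset.Iic j, (2 * n i + 1) : ℕ) : ℝ))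
    = artanhL z ^ m / (m.factorial : ℝ) := by
  have hz2 : z ^ 2 < 1 := by nlinarith
  have hg' : Summable (fun n : ℕ => z ^ (2 * n + 1)) := by
    have := (summable_geometric_of_lt_one (sq_nonneg z) hz2).mul_left z
    refine this.congr fun n => ?_
    rw [pow_add, pow_mul, pow_one, mul_comm]
  have hg0 : ∀ n : ℕ, 0 ≤ z ^ (2 * n + 1) / ((2 * n + 1 : ℕ) : ℝ) := fun n =>
    div_nonneg (pow_nonneg h0.le _) (Nat.cast_nonneg _)
  have hg : Summable (fun n : ℕ => z ^ (2 * n + 1) / ((2 * n + 1 : ℕ) : ℝ)) := by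
    refine hg'.of_nonneg_of_le hg0 fun n => ?_
    apply div_le_self (pow_nonneg h0.le _)
    exact_mod_cast Nat.one_le_iff_ne_zero.mpr (by omega)
  have hart := (hasSum_artanh h0 h1).tsum_eq
  set F : (Fin m → ℕ) → ℝ := fun n => z ^ (∑ i, (2 * n i + 1)) /
      ∏ j, ((∑ i ∈ Finset.Iic j, (2 * n i + 1) : ℕ) : ℝ) with hFdef
  have hone : ∀ (n : Fin m → ℕ) (j : Fin m),
      (1 : ℝ) ≤ ((∑ i ∈ Finset.Iic j, (2 * n i + 1) : ℕ) : ℝ) := by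
    intro n j
    have h1' : 1 ≤ 2 * n j + 1 := by omega
    have h2' := Finset.single_le_sum (f := fun i => 2 * n i + 1)
      (fun i _ => Nat.zero_le _) (Finset.mem_Iic.mpr (le_refl j))
    exact_mod_cast le_trans h1' h2'
  have hP := tsum_pi_prod (fun n : ℕ => z ^ (2 * n + 1)) (fun n => pow_nonneg h0.le _) hg' m
  have hPF : ∀ n : Fin m → ℕ, ∏ i, z ^ (2 * n i + 1) = z ^ (∑ i, (2 * n i + 1)) := fun n =>
    Finset.prod_pow_eq_pow_sum _ _ _
  have hF0 : ∀ n, 0 ≤ F n := fun n => div_nonneg (pow_nonneg h0.le _)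
    (Finset.prod_nonneg fun j _ => by positivity)
  have hF : Summable F := by
    refine hP.1.of_nonneg_of_le hF0 fun n => ?_
    rw [hPF n]
    refine div_le_self (pow_nonneg h0.le _) ?_
    have := Finset.prod_le_prod (s := Finset.univ)
      (f := fun _ : Fin m => (1:ℝ)) (g := fun j => ((∑ i ∈ Finset.Iic j, (2 * n i + 1) : ℕ) : ℝ))
      (fun i _ => zero_le_one) (fun j _ => hone n j)
    simpa using this
  have hT : ∀ (σ : Equiv.Perm (Fin m)) (n : Fin m → ℕ),
      z ^ (∑ i, (2 * n i + 1)) * ∏ j, (∑ i ∈ Finset.Iic j, ((2 * n (σ i) + 1 : ℕ) : ℝ))⁻¹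
        = F ((Equiv.arrowCongr σ.symm (Equiv.refl ℕ)) n) := by
    intro σ n
    have hE : ∀ i, (Equiv.arrowCongr σ.symm (Equiv.refl ℕ)) n i = n (σ i) := by
      intro i; simp
    rw [hFdef]
    simp only [hE]
    rw [Equiv.sum_comp σ (fun i => 2 * n i + 1), div_eq_mul_inv, ← Finset.prod_inv_distrib]
    congr 1
    refine Finset.prod_congr rfl fun j _ => ?_
    congr 1
    push_cast
    rfl
  have hTsummable : ∀ σ : Equiv.Perm (Fin m),
      Summable (fun n : Fin m → ℕ =>
        z ^ (∑ i, (2 * n i + 1)) * ∏ j, (∑ i ∈ Finset.Iic j, ((2 * n (σ i) + 1 : ℕ) : ℝ))⁻¹) := by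
    intro σ
    exact (((Equiv.arrowCongr σ.symm (Equiv.refl ℕ)).summable_iff).mpr hF).congr
      fun n => (hT σ n).symm
  have chain : artanhL z ^ m = (m.factorial : ℝ) * ∑' n, F n := by
    calc artanhL z ^ m
        = ∑' n : Fin m → ℕ, ∏ i, z ^ (2 * n i + 1) / ((2 * n i + 1 : ℕ) : ℝ) := by
          rw [(tsum_pi_prod _ hg0 hg m).2, hart]
      _ = ∑' n : Fin m → ℕ, ∑ σ : Equiv.Perm (Fin m),
            z ^ (∑ i, (2 * n i + 1)) * ∏ j, (∑ i ∈ Finset.Iic j, ((2 * n (σ i) + 1 : ℕ) : ℝ))⁻¹ := by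
          refine tsum_congr fun n => ?_
          have hpos : ∀ i, (0 : ℝ) < ((2 * n i + 1 : ℕ) : ℝ) := fun i => by positivity
          calc ∏ i, z ^ (2 * n i + 1) / ((2 * n i + 1 : ℕ) : ℝ)
              = (∏ i, z ^ (2 * n i + 1)) * ∏ i, (((2 * n i + 1 : ℕ) : ℝ))⁻¹ := by
                rw [← Finset.prod_mul_distrib]
                exact Finset.prod_congr rfl fun i _ => div_eq_mul_inv _ _
            _ = z ^ (∑ i, (2 * n i + 1)) * ∑ σ : Equiv.Perm (Fin m),
                  ∏ j, (∑ i ∈ Finset.Iic j, ((2 * n (σ i) + 1 : ℕ) : ℝ))⁻¹ := by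
                rw [hPF n, ← prefix_perm_sum m (fun i => ((2 * n i + 1 : ℕ) : ℝ)) hpos]
            _ = _ := Finset.mul_sum _ _ _
      _ = ∑ σ : Equiv.Perm (Fin m), ∑' n : Fin m → ℕ,
            z ^ (∑ i, (2 * n i + 1)) * ∏ j, (∑ i ∈ Finset.Iic j, ((2 * n (σ i) + 1 : ℕ) : ℝ))⁻¹ :=
          Summable.tsum_finsetSum fun σ _ => hTsummable σ
      _ = ∑ σ : Equiv.Perm (Fin m), ∑' n, F n := by
          refine Finset.sum_congr rfl fun σ _ => ?_
          rw [tsum_congr (hT σ)]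
          exact Equiv.tsum_eq (Equiv.arrowCongr σ.symm (Equiv.refl ℕ)) F
      _ = (m.factorial : ℝ) * ∑' n, F n := by
          rw [Finset.sum_const, nsmul_eq_mul]
          congr 2
          simp [Fintype.card_perm]
  have hfac : (m.factorial : ℝ) ≠ 0 := Nat.cast_ne_zero.mpr m.factorial_ne_zero
  rw [eq_div_iff hfac]
  rw [eq_comm, mul_comm] at chain
  exact chain

end aux

theorem stmt15 (r : ℕ) (hr : 0 < r) (z : ℝ) (h0 : 0 < z) (h1 : z < 1) :
    AthL (List.replicate r 1) z = (artanhL z) ^ r / (r.factorial : ℝ) := by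
  rw [AthL]
  simp only [List.get_eq_getElem, List.getElem_replicate, pow_one]
  rw [main_lemma _ h0 h1, List.length_replicate]
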